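/- arXiv:1310.8559 — 7 statements merged into one kernel-verified Lean document; each statement's English description precedes it below -/
import Mathlib

section
/- Let n ≥ 7 and let Ψ(x) = x³ − (n+3)x² + 3nx − 4. Then Ψ(0) < 0, Ψ(1) > 0, Ψ(3 − 2.5/n) > 0, Ψ(3 − 1/n) < 0, Ψ(n) < 0, and Ψ(n + 1/n) > 0. -/
theorem stmt_0 (n : ℝ) (hn : 7 ≤ n)
    (Ψ : ℝ → ℝ) (hΨ : ∀ x, Ψ x = x ^ 3 - (n + 3) * x ^ 2 + 3 * n * x - 4) :
    Ψ 0 < 0 ∧ Ψ 1 > 0 ∧ Ψ (3 - 2.5 / n) > 0 ∧ Ψ (3 - 1 / n) < 0 ∧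
      Ψ n < 0 ∧ Ψ (n + 1 / n) > 0 := by
  have hn0 : (0:ℝ) < n := by linarith
  have hu : n * (1/n) = 1 := mul_one_div_cancel (by linarith)
  have hu0 : (0:ℝ) < 1/n := by positivity
  have hu7 : 1/n ≤ 1/7 := by
    apply one_div_le_one_div_of_le <;> linarith
  have h25 : (2.5:ℝ)/n = 2.5 * (1/n) := by ring
  refine ⟨?_, ?_, ?_, ?_, ?_, ?_⟩ <;> rw [hΨ]
  · norm_num
  · nlinarith
  · rw [h25]; nlinarith [sq_nonneg (1/n), sq_nonneg (n*(1/n) - 1), mul_pos hn0 hu0, sq_nonneg (1/n - 1/7)]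
  · nlinarith [sq_nonneg (1/n), mul_pos hn0 hu0, sq_nonneg (1/n - 1/7)]
  · ring_nf; nlinarith
  · nlinarith [sq_nonneg (1/n), mul_pos hn0 hu0, pow_pos hu0 3, sq_nonneg (1/n - 1/7)]
end

section
/- Let n ≥ 7 and Ψ(x) = x³ − (n+3)x² + 3nx − 4. Then Ψ has a root q₂ with 3 − 2.5/n < q₂ < 3 − 1/n and a root q₁ with n < q₁ < n + 1/n. -/
theorem stmt_1 (n : ℝ) (hn : 7 ≤ n)
    (Ψ : ℝ → ℝ) (hΨ : ∀ x, Ψ x = x ^ 3 - (n + 3) * x ^ 2 + 3 * n * x - 4) :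
    (∃ q2 : ℝ, Ψ q2 = 0 ∧ 3 - 2.5 / n < q2 ∧ q2 < 3 - 1 / n) ∧
      (∃ q1 : ℝ, Ψ q1 = 0 ∧ n < q1 ∧ q1 < n + 1 / n) := by
  have hn0 : (0:ℝ) < n := by linarith
  have hn3 : (0:ℝ) < n ^ 3 := by positivity
  have hc : Continuous Ψ := by
    have h : Ψ = fun x => x ^ 3 - (n + 3) * x ^ 2 + 3 * n * x - 4 := funext hΨ
    rw [h]; continuity
  -- sign values
  have h1 : 0 < Ψ (3 - 2.5 / n) := by
    have key : Ψ (3 - 2.5 / n) * n ^ 3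
        = 3.5 * n ^ 3 - 28.75 * n ^ 2 + 37.5 * n - 15.625 := by
      rw [hΨ]; field_simp; ring
    have hpos : 0 < 3.5 * n ^ 3 - 28.75 * n ^ 2 + 37.5 * n - 15.625 := by
      nlinarith [sq_nonneg (n - 7), mul_nonneg (sub_nonneg.2 hn) (sq_nonneg (n - 7)),
        mul_nonneg (sub_nonneg.2 hn) (sub_nonneg.2 hn), sq_nonneg n]
    nlinarith [key, hn3]
  have h2 : Ψ (3 - 1 / n) < 0 := by
    have key : Ψ (3 - 1 / n) * n ^ 3 = -(n ^ 3) - 10 * n ^ 2 + 6 * n - 1 := by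
      rw [hΨ]; field_simp; ring
    have hneg : -(n ^ 3) - 10 * n ^ 2 + 6 * n - 1 < 0 := by nlinarith
    nlinarith [key, hn3]
  have h3 : Ψ n < 0 := by rw [hΨ]; ring_nf; linarith
  have h4 : 0 < Ψ (n + 1 / n) := by
    have key : Ψ (n + 1 / n) * n ^ 3 = n ^ 4 - 7 * n ^ 3 + 2 * n ^ 2 - 3 * n + 1 := by
      rw [hΨ]; field_simp; ring
    have hpos : 0 < n ^ 4 - 7 * n ^ 3 + 2 * n ^ 2 - 3 * n + 1 := by
      nlinarith [mul_nonneg (mul_nonneg hn0.le (mul_nonneg hn0.le hn0.le)) (sub_nonneg.2 hn)]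
    nlinarith [key, hn3]
  have hab : (3 - 2.5 / n : ℝ) < 3 - 1 / n := by
    have : (1:ℝ) / n < 2.5 / n := by
      rw [div_lt_div_iff₀ hn0 hn0]; nlinarith
    linarith
  constructor
  · have hsub := intermediate_value_Ioo' hab.le hc.continuousOn
    have h0 : (0:ℝ) ∈ Set.Ioo (Ψ (3 - 1 / n)) (Ψ (3 - 2.5 / n)) := ⟨h2, h1⟩
    obtain ⟨q, hq, hq0⟩ := hsub h0
    exact ⟨q, hq0, hq.1, hq.2⟩
  · have hab2 : n < n + 1 / n := by
      have : (0:ℝ) < 1 / n := by positivity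
      linarith
    have hsub := intermediate_value_Ioo hab2.le hc.continuousOn
    have h0 : (0:ℝ) ∈ Set.Ioo (Ψ n) (Ψ (n + 1 / n)) := ⟨h3, h4⟩
    obtain ⟨q, hq, hq0⟩ := hsub h0
    exact ⟨q, hq0, hq.1, hq.2⟩
end

section
/- Let G = S_n⁺ (the star on n vertices plus one edge) with n ≥ 7. Then e(G) + 3 − 2.5/n < q₁(G) + q₂(G) < e(G) + 3, where q₁, q₂ are the two largest eigenvalues of the signless Laplacian Q(G) = D + A, and e(G) = n is the number of edges. -/
/-- Adjacency relation of `S_n⁺` (0-indexed): the triangle is on vertices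
`0,1,2`, the center `2` is adjacent to all vertices `j ≥ 3`. -/
def starPlusAdj (n : ℕ) (i j : Fin n) : Prop :=
  (i.val < 3 ∧ j.val < 3 ∧ i ≠ j) ∨ (i.val = 2 ∧ 3 ≤ j.val) ∨ (j.val = 2 ∧ 3 ≤ i.val)

instance (n : ℕ) (i j : Fin n) : Decidable (starPlusAdj n i j) := by
  unfold starPlusAdj; infer_instance

/-- Adjacency matrix of `S_n⁺`. -/
def starPlusA (n : ℕ) : Matrix (Fin n) (Fin n) ℝ :=
  Matrix.of fun i j => if starPlusAdj n i j then 1 else 0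

/-- Signless Laplacian `Q = D + A` of `S_n⁺`, where `D` is the diagonal
matrix of the row sums (degrees). -/
def starPlusQ (n : ℕ) : Matrix (Fin n) (Fin n) ℝ :=
  Matrix.diagonal (fun i => ∑ j, starPlusA n i j) + starPlusA n


open Matrix Finset Polynomial in
private lemma rowsum (n : ℕ) (hn : 7 ≤ n) (i : Fin n) :
    (∑ j, starPlusA n i j)
      = if i.val = 2 then (n:ℝ)-1 else if i.val < 3 then 2 else 1 := by
  have hsum : (∑ j, starPlusA n i j)
      = ((Finset.univ.filter (fun j => starPlusAdj n i j)).card : ℝ) := by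
    simp [starPlusA, Finset.sum_boole]
  rw [hsum]
  rcases lt_trichotomy i.val 2 with h2 | h2 | h2
  · -- i.val = 0 or 1 : two neighbours
    have : (Finset.univ.filter (fun j => starPlusAdj n i j))
        = {(⟨0, by omega⟩ : Fin n), ⟨1, by omega⟩, ⟨2, by omega⟩} \ {i} := by
      ext j
      simp [starPlusAdj, Fin.ext_iff]
      omega
    rw [this]
    have hi : i ∈ ({(⟨0, by omega⟩ : Fin n), ⟨1, by omega⟩, ⟨2, by omega⟩} : Finset (Fin n)) := by
      simp [Fin.ext_iff]; omega
    rw [Finset.sdiff_singleton_eq_erase, Finset.card_erase_of_mem hi]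
    have : ({(⟨0, by omega⟩ : Fin n), ⟨1, by omega⟩, ⟨2, by omega⟩} : Finset (Fin n)).card = 3 := by
      simp [Fin.ext_iff]
    rw [this]
    have h3 : i.val < 3 := by omega
    have h2' : ¬ i.val = 2 := by omega
    simp [h2', h3]
  · -- center
    have : (Finset.univ.filter (fun j => starPlusAdj n i j)) = Finset.univ.erase i := by
      ext j
      simp [starPlusAdj, Fin.ext_iff]
      omega
    rw [this, Finset.card_erase_of_mem (Finset.mem_univ i)]
    simp [h2, Finset.card_univ]
    have : (1:ℝ) ≤ n := by exact_mod_cast by omega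
    push_cast [Nat.cast_sub (by omega : 1 ≤ n)]
    ring
  · -- pendant
    have : (Finset.univ.filter (fun j => starPlusAdj n i j))
        = {(⟨2, by omega⟩ : Fin n)} := by
      ext j
      simp [starPlusAdj, Fin.ext_iff]
      omega
    rw [this]
    have h2' : ¬ i.val = 2 := by omega
    have h3 : ¬ i.val < 3 := by omega
    simp [h2', h3]

open Matrix Finset Polynomial in
private lemma det_key (n : ℕ) (hn : 7 ≤ n) (t : ℝ) (ht : t ≠ 1) :
    (t • (1 : Matrix (Fin n) (Fin n) ℝ) - starPlusQ n).det
      = (t-1)^(n-3) * (t^3 - ((n:ℝ)+3)*t^2 + 3*(n:ℝ)*t - 4) := by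
  have ht' : t - 1 ≠ 0 := sub_ne_zero.mpr ht
  set m := n - 3 with hm
  have hmcast : (m:ℝ) = (n:ℝ) - 3 := by
    rw [hm]; push_cast [Nat.cast_sub (by omega : 3 ≤ n)]; ring
  have hnm : 3 + m = n := by omega
  let f : Fin 3 ⊕ Fin m ≃ Fin n := finSumFinEquiv.trans (finCongr hnm)
  have hfl : ∀ a : Fin 3, (f (Sum.inl a)).val = a.val := fun a => rfl
  have hfr : ∀ a : Fin m, (f (Sum.inr a)).val = 3 + a.val := fun a => rfl
  set M := t • (1 : Matrix (Fin n) (Fin n) ℝ) - starPlusQ n with hM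
  have hentry : ∀ i j : Fin n, M i j =
      (if i = j then t - (if i.val = 2 then (n:ℝ)-1 else if i.val < 3 then 2 else 1) else 0)
      - (if starPlusAdj n i j then 1 else 0) := by
    intro i j
    simp only [hM, Matrix.sub_apply, Matrix.smul_apply, Matrix.one_apply, starPlusQ,
      Matrix.add_apply, Matrix.diagonal_apply]
    rw [rowsum n hn]
    by_cases h : i = j <;> simp [h, starPlusA] <;> ring
  set At : Matrix (Fin 3) (Fin 3) ℝ :=
    Matrix.of (fun a b => if a = b then (if a.val = 2 then t-((n:ℝ)-1) else t-2) else -1) with hAt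
  set Bt : Matrix (Fin 3) (Fin m) ℝ := Matrix.of fun a _ => if a.val = 2 then (-1:ℝ) else 0 with hBt
  set Ct : Matrix (Fin m) (Fin 3) ℝ := Matrix.of fun _ b => if b.val = 2 then (-1:ℝ) else 0 with hCt
  set Dt : Matrix (Fin m) (Fin m) ℝ := Matrix.diagonal (fun _ => t - 1) with hDt
  have hblock : M.submatrix f f = Matrix.fromBlocks At Bt Ct Dt := by
    ext x y
    cases x with
    | inl a =>
      cases y with
      | inl b =>
        rw [Matrix.submatrix_apply, Matrix.fromBlocks_apply₁₁, hentry]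
        have heq : (f (Sum.inl a) = f (Sum.inl b)) ↔ a = b := by
          rw [Fin.ext_iff, hfl, hfl, Fin.ext_iff]
        have hadj : starPlusAdj n (f (Sum.inl a)) (f (Sum.inl b)) ↔ ¬ a = b := by
          simp only [starPlusAdj, ne_eq, Fin.ext_iff, hfl]
          have := a.isLt; have := b.isLt
          omega
        rw [hAt]
        by_cases hab : a = b
        · subst hab
          simp only [heq.mpr rfl, if_true, hadj, Matrix.of_apply, hfl, if_pos rfl]
          have := a.isLt
          split_ifs <;> simp_all <;> ring
        · simp only [Matrix.of_apply, if_neg (heq.not.mpr hab), if_neg hab,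
            if_pos (hadj.mpr hab)]
          ring
      | inr b =>
        rw [Matrix.submatrix_apply, Matrix.fromBlocks_apply₁₂, hentry]
        have hne : ¬ f (Sum.inl a) = f (Sum.inr b) := by
          rw [Fin.ext_iff, hfl, hfr]; omega
        have hadj : starPlusAdj n (f (Sum.inl a)) (f (Sum.inr b)) ↔ a.val = 2 := by
          simp only [starPlusAdj, ne_eq, Fin.ext_iff, hfl, hfr]
          have := a.isLt
          omega
        rw [hBt, if_neg hne]
        by_cases h2 : a.val = 2 <;>
          simp [h2, hadj]
    | inr a =>
      cases y with
      | inl b =>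
        rw [Matrix.submatrix_apply, Matrix.fromBlocks_apply₂₁, hentry]
        have hne : ¬ f (Sum.inr a) = f (Sum.inl b) := by
          rw [Fin.ext_iff, hfl, hfr]; omega
        have hadj : starPlusAdj n (f (Sum.inr a)) (f (Sum.inl b)) ↔ b.val = 2 := by
          simp only [starPlusAdj, ne_eq, Fin.ext_iff, hfl, hfr]
          have := b.isLt
          omega
        rw [hCt, if_neg hne]
        by_cases h2 : b.val = 2 <;>
          simp [h2, hadj]
      | inr b =>
        rw [Matrix.submatrix_apply, Matrix.fromBlocks_apply₂₂, hentry]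
        have heq : (f (Sum.inr a) = f (Sum.inr b)) ↔ a = b := by
          rw [Fin.ext_iff, hfr, hfr, Fin.ext_iff]; omega
        have hadj : ¬ starPlusAdj n (f (Sum.inr a)) (f (Sum.inr b)) := by
          simp only [starPlusAdj, ne_eq, Fin.ext_iff, hfr]
          omega
        rw [hDt, Matrix.diagonal_apply]
        by_cases hab : a = b
        · subst hab
          have hv2 : ¬ (f (Sum.inr a)).val = 2 := by rw [hfr]; omega
          have hv3 : ¬ (f (Sum.inr a)).val < 3 := by rw [hfr]; omega
          simp [heq.mpr rfl, hadj, hv2, hv3]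
        · simp [heq.not.mpr hab, hab, hadj]
  -- now the determinant
  have hdetD : Dt.det = (t-1)^m := by
    simp [hDt, Matrix.det_diagonal]
  haveI : Invertible Dt := by
    apply Matrix.invertibleOfIsUnitDet
    rw [hdetD]
    exact isUnit_iff_ne_zero.mpr (pow_ne_zero _ ht')
  have hinv : ⅟Dt = Matrix.diagonal (fun _ => (t-1)⁻¹) :=
    invOf_eq_right_inv (by
      rw [hDt, Matrix.diagonal_mul_diagonal]
      simp [mul_inv_cancel₀ ht'])
  have hG : Bt * ⅟Dt * Ct
      = Matrix.of (fun a b : Fin 3 =>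
          if a.val = 2 ∧ b.val = 2 then (m:ℝ) * (t-1)⁻¹ else 0) := by
    rw [hinv]
    ext a b
    simp only [Matrix.mul_apply, Matrix.diagonal_apply, hBt, hCt, Matrix.of_apply]
    by_cases ha : a.val = 2 <;> by_cases hb : b.val = 2 <;>
      simp [ha, hb, Finset.sum_ite_eq, Finset.mul_sum]
  have hdet3 : (At - Bt * ⅟Dt * Ct).det
      = t^3 - ((n:ℝ)+3)*t^2 + 3*(n:ℝ)*t - 4 := by
    rw [hG, Matrix.det_fin_three]
    simp only [Matrix.sub_apply, Matrix.of_apply, hAt]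
    norm_num [Fin.ext_iff, hmcast]
    field_simp
    ring
  calc M.det = (M.submatrix f f).det := (Matrix.det_submatrix_equiv_self f M).symm
    _ = (Matrix.fromBlocks At Bt Ct Dt).det := by rw [hblock]
    _ = Dt.det * (At - Bt * ⅟Dt * Ct).det := Matrix.det_fromBlocks₂₂ _ _ _ _
    _ = (t-1)^(n-3) * (t^3 - ((n:ℝ)+3)*t^2 + 3*(n:ℝ)*t - 4) := by
        rw [hdetD, hdet3, hm]

open Matrix Finset Polynomial in
private lemma prod_eig {n : ℕ} (Q : Matrix (Fin n) (Fin n) ℝ) (hQ : Q.IsHermitian) (t : ℝ) :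
    ∏ k, (t - hQ.eigenvalues k) = (t • (1 : Matrix (Fin n) (Fin n) ℝ) - Q).det := by
  set V : Matrix (Fin n) (Fin n) ℝ := (Matrix.IsHermitian.eigenvectorUnitary hQ : Matrix (Fin n) (Fin n) ℝ) with hV
  have hVmem := (Matrix.IsHermitian.eigenvectorUnitary hQ).2
  have hV1 : V * star V = 1 := Unitary.mul_star_self_of_mem hVmem
  have hV2 : star V * V = 1 := Unitary.star_mul_self_of_mem hVmem
  have hspec : Q = V * Matrix.diagonal (hQ.eigenvalues) * star V := by
    have := hQ.spectral_theorem
    simpa using this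
  have key : t • (1 : Matrix (Fin n) (Fin n) ℝ) - Q
      = V * Matrix.diagonal (fun k => t - hQ.eigenvalues k) * star V := by
    have hdiag : Matrix.diagonal (fun k => t - hQ.eigenvalues k)
        = t • (1 : Matrix (Fin n) (Fin n) ℝ) - Matrix.diagonal (hQ.eigenvalues) := by
      rw [← Matrix.diagonal_sub]
      congr 1
      funext k
      simp [Matrix.smul_one_eq_diagonal]
    rw [hdiag, Matrix.mul_sub, Matrix.sub_mul, ← hspec]
    congr 1
    rw [mul_smul_comm, Matrix.mul_one, smul_mul_assoc, hV1]
  rw [key, Matrix.det_mul, Matrix.det_mul, Matrix.det_diagonal]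
  have : (star V).det * V.det = 1 := by
    rw [← Matrix.det_mul, hV2, Matrix.det_one]
  linear_combination (-(∏ k, (t - hQ.eigenvalues k))) * this

open Matrix Finset Polynomial in
theorem stmt_3 (n : ℕ) (hn : 7 ≤ n)
    (hQ : (starPlusQ n).IsHermitian) (q1 q2 : ℝ) (i j : Fin n) (hij : i ≠ j)
    (hq1 : hQ.eigenvalues i = q1) (hq2 : hQ.eigenvalues j = q2)
    (hmax1 : ∀ k, hQ.eigenvalues k ≤ q1)
    (hmax2 : ∀ k, k ≠ i → hQ.eigenvalues k ≤ q2) :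
    (n : ℝ) + 3 - 2.5 / n < q1 + q2 ∧ q1 + q2 < (n : ℝ) + 3 := by
  have hN : (7:ℝ) ≤ (n:ℝ) := by exact_mod_cast hn
  have hNpos : (0:ℝ) < n := by linarith
  set N := (n:ℝ) with hNdef
  set g : ℝ → ℝ := fun t => t^3 - (N+3)*t^2 + 3*N*t - 4 with hg
  have hgc : Continuous g := by fun_prop
  -- the three roots of the cubic
  have hb_pos : (0:ℝ) < 2.5/N := by positivity
  have hb_lt1 : (2.5:ℝ)/N < 1 := by
    rw [div_lt_one hNpos]; linarith
  obtain ⟨r3, hr3I, hr3⟩ : ∃ x ∈ Set.Ioo (0:ℝ) (2.5/N), g x = 0 := by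
    have h0 : g 0 < 0 := by norm_num [hg]
    have hb : 0 < g (2.5/N) := by
      have hbN : (2.5/N) * N = 2.5 := div_mul_cancel₀ 2.5 (ne_of_gt hNpos)
      have hb7 : (2.5/N) * 7 ≤ 2.5 := by
        calc (2.5/N) * 7 ≤ (2.5/N) * N := by
              apply mul_le_mul_of_nonneg_left hN (le_of_lt hb_pos)
          _ = 2.5 := hbN
      simp only [hg]
      nlinarith [hb_pos, hbN, hb7, sq_nonneg (2.5/N)]
    have := intermediate_value_Ioo (le_of_lt hb_pos) hgc.continuousOn
    exact this ⟨h0, hb⟩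
  obtain ⟨r2, hr2I, hr2⟩ : ∃ x ∈ Set.Ioo (1:ℝ) 3, g x = 0 := by
    have h1 : 0 < g 1 := by simp only [hg]; nlinarith
    have h3 : g 3 < 0 := by simp only [hg]; nlinarith
    have := intermediate_value_Ioo' (by norm_num : (1:ℝ) ≤ 3) hgc.continuousOn
    exact this ⟨h3, h1⟩
  obtain ⟨r1, hr1I, hr1⟩ : ∃ x ∈ Set.Ioo (N-1) (N+3), g x = 0 := by
    have h1 : g (N-1) < 0 := by simp only [hg]; nlinarith
    have h3 : 0 < g (N+3) := by simp only [hg]; nlinarith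
    have := intermediate_value_Ioo (by linarith : N-1 ≤ N+3) hgc.continuousOn
    exact this ⟨h1, h3⟩
  obtain ⟨hr3a, hr3b⟩ := hr3I
  obtain ⟨hr2a, hr2b⟩ := hr2I
  obtain ⟨hr1a, hr1b⟩ := hr1I
  have hr31 : r3 < 1 := lt_trans hr3b hb_lt1
  have h12 : r1 ≠ r2 := by intro h; rw [h] at hr1a; linarith
  have h13 : r1 ≠ r3 := by intro h; rw [h] at hr1a; linarith
  have h23 : r2 ≠ r3 := by intro h; rw [h] at hr2a; linarith
  have hr1ne1 : r1 ≠ 1 := by intro h; rw [h] at hr1a; linarith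
  have hr2ne1 : r2 ≠ 1 := by intro h; rw [h] at hr2a; linarith
  have hr3ne1 : r3 ≠ 1 := by intro h; rw [h] at hr31; linarith
  -- polynomials
  set q : ℝ[X] := X^3 - C (N+3) * X^2 + C (3*N) * X - C 4 with hq
  have hqeval : ∀ t, q.eval t = g t := by intro t; simp [hq, hg]
  have hqdeg : q.natDegree = 3 := by rw [hq]; compute_degree!
  have hqne : q ≠ 0 := fun h => by simp [h] at hqdeg
  set P1 : ℝ[X] := ∏ k, (X - C (hQ.eigenvalues k)) with hP1def
  set P2 : ℝ[X] := (X - C 1)^(n-3) * q with hP2def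
  have hP : P1 = P2 := by
    apply Polynomial.eq_of_infinite_eval_eq
    refine ((Set.finite_singleton (1:ℝ)).infinite_compl).mono ?_
    intro t ht
    have ht1 : t ≠ 1 := ht
    have e1 : P1.eval t = ∏ k, (t - hQ.eigenvalues k) := by
      simp [hP1def, Polynomial.eval_prod]
    have e2 : P2.eval t = (t-1)^(n-3) * g t := by
      simp [hP2def, hqeval t]
    simp only [Set.mem_setOf_eq, e1, e2, prod_eig _ hQ t, det_key n hn t ht1]
    rfl
  have hqroots : q.roots = {r1, r2, r3} := by
    have hle : ({r1, r2, r3} : Multiset ℝ) ≤ q.roots := by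
      rw [Multiset.le_iff_count]
      intro a
      by_cases ha : a ∈ ({r1,r2,r3} : Multiset ℝ)
      · have haroot : a ∈ q.roots := by
          rw [Polynomial.mem_roots hqne]
          simp only [Multiset.insert_eq_cons, Multiset.mem_cons, Multiset.mem_singleton] at ha
          rcases ha with h|h|h <;> subst h <;> (rw [Polynomial.IsRoot, hqeval]; assumption)
        have h1le : 1 ≤ Multiset.count a q.roots := Multiset.one_le_count_iff_mem.mpr haroot
        have hc1 : Multiset.count a ({r1,r2,r3} : Multiset ℝ) = 1 := by
          simp only [Multiset.insert_eq_cons, Multiset.mem_cons, Multiset.mem_singleton] at ha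
          rcases ha with h|h|h <;> subst h <;>
            simp [Multiset.count_cons, Multiset.count_singleton, h12, h13, h23,
              h12.symm, h13.symm, h23.symm, Ne.symm]
        omega
      · rw [Multiset.count_eq_zero_of_notMem ha]
        exact Nat.zero_le _
    have hcard : q.roots.card ≤ 3 := hqdeg ▸ q.card_roots'
    exact (Multiset.eq_of_le_of_card_le hle (by simpa using hcard)).symm
  have hroots1 : P1.roots = Finset.univ.val.map hQ.eigenvalues := by
    have e : P1 = ((Finset.univ.val.map hQ.eigenvalues).map (fun a => X - C a)).prod := by
      rw [Multiset.map_map]; rfl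
    rw [e, Polynomial.roots_multiset_prod_X_sub_C]
  have hroots2 : P2.roots = (n-3) • ({1} : Multiset ℝ) + {r1,r2,r3} := by
    rw [hP2def, Polynomial.roots_mul
      (mul_ne_zero (pow_ne_zero _ (Polynomial.X_sub_C_ne_zero 1)) hqne),
      Polynomial.roots_pow, Polynomial.roots_X_sub_C, hqroots]
  have hM : Finset.univ.val.map hQ.eigenvalues
      = (n-3) • ({1} : Multiset ℝ) + {r1,r2,r3} := by
    rw [← hroots1, hP, hroots2]
  -- every eigenvalue is 1 or one of the three roots
  have hmem : ∀ k : Fin n, hQ.eigenvalues k = 1 ∨ hQ.eigenvalues k = r1 ∨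
      hQ.eigenvalues k = r2 ∨ hQ.eigenvalues k = r3 := by
    intro k
    have hmm : hQ.eigenvalues k ∈ Finset.univ.val.map hQ.eigenvalues :=
      Multiset.mem_map_of_mem _ (Finset.mem_val.mpr (Finset.mem_univ k))
    rw [hM] at hmm
    simp only [Multiset.mem_add, Multiset.mem_nsmul, Multiset.mem_singleton,
      Multiset.insert_eq_cons, Multiset.mem_cons] at hmm
    tauto
  have hex1 : ∃ k, hQ.eigenvalues k = r1 := by
    have hmm : r1 ∈ Finset.univ.val.map hQ.eigenvalues := by
      rw [hM]; simp
    obtain ⟨k, _, hk⟩ := Multiset.mem_map.mp hmm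
    exact ⟨k, hk⟩
  have hex2 : ∃ k, hQ.eigenvalues k = r2 := by
    have hmm : r2 ∈ Finset.univ.val.map hQ.eigenvalues := by
      rw [hM]; simp
    obtain ⟨k, _, hk⟩ := Multiset.mem_map.mp hmm
    exact ⟨k, hk⟩
  have hcount1 : Multiset.count r1 (Finset.univ.val.map hQ.eigenvalues) = 1 := by
    rw [hM, Multiset.count_add, Multiset.count_nsmul, Multiset.count_singleton]
    simp [hr1ne1, h12, h13, Multiset.count_cons, Multiset.count_singleton,
      (Ne.symm h12), (Ne.symm h13)]
  obtain ⟨k1, hk1⟩ := hex1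
  have hq1ge : r1 ≤ q1 := hk1 ▸ hmax1 k1
  have hq1r1 : q1 = r1 := by
    have hq1cases := hmem i
    rw [hq1] at hq1cases
    rcases hq1cases with h|h|h|h
    · exfalso; rw [h] at hq1ge; linarith
    · exact h
    · exfalso; rw [h] at hq1ge; linarith
    · exfalso; rw [h] at hq1ge; linarith
  obtain ⟨k2, hk2⟩ := hex2
  have hk2i : k2 ≠ i := by
    intro h
    rw [h, hq1, hq1r1] at hk2
    exact h12 hk2
  have hq2ge : r2 ≤ q2 := hk2 ▸ hmax2 k2 hk2i
  have hq2ner1 : q2 ≠ r1 := by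
    intro h
    have hi1 : r1 = hQ.eigenvalues i := by rw [hq1, hq1r1]
    have hj1 : r1 = hQ.eigenvalues j := by rw [hq2, h]
    have hfc : 1 < (Finset.univ.filter (fun a => r1 = hQ.eigenvalues a)).card := by
      rw [Finset.one_lt_card]
      exact ⟨i, by simp [hi1], j, by simp [hj1], hij⟩
    have hcm : Multiset.count r1 (Finset.univ.val.map hQ.eigenvalues)
        = (Finset.univ.filter (fun a => r1 = hQ.eigenvalues a)).card := by
      rw [Multiset.count_map, ← Finset.filter_val]
      rfl
    omega
  have hq2r2 : q2 = r2 := by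
    have hq2cases := hmem j
    rw [hq2] at hq2cases
    rcases hq2cases with h|h|h|h
    · exfalso; rw [h] at hq2ge; linarith
    · exact absurd h hq2ner1
    · exact h
    · exfalso; rw [h] at hq2ge; linarith
  -- Vieta
  have hfact : q = (X - C r1) * ((X - C r2) * (X - C r3)) := by
    have e0 : P1 = ((Finset.univ.val.map hQ.eigenvalues).map (fun a => X - C a)).prod := by
      rw [Multiset.map_map]; rfl
    have e1 : P1 = (X - C 1)^(n-3) * ((X - C r1) * ((X - C r2) * (X - C r3))) := by
      rw [e0, hM]
      simp [Multiset.nsmul_singleton, Multiset.map_replicate, Multiset.prod_replicate,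
        mul_assoc]
      ring
    have e2 : (X - C 1)^(n-3) * q
        = (X - C 1)^(n-3) * ((X - C r1) * ((X - C r2) * (X - C r3))) := by
      rw [← hP2def, ← hP, e1]
    exact mul_left_cancel₀ (pow_ne_zero _ (Polynomial.X_sub_C_ne_zero 1)) e2
  have hVieta : r1 + r2 + r3 = N + 3 := by
    have h1 := congrArg (Polynomial.eval 1) hfact
    have h2 := congrArg (Polynomial.eval (-1)) hfact
    have h3 := congrArg (Polynomial.eval 0) hfact
    simp only [hq, Polynomial.eval_mul, Polynomial.eval_sub, Polynomial.eval_add,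
      Polynomial.eval_pow, Polynomial.eval_X, Polynomial.eval_C, Polynomial.eval_one] at h1 h2 h3
    norm_num at h1 h2 h3
    linear_combination (1/2 : ℝ) * h1 + (1/2 : ℝ) * h2 + h3
  constructor
  · rw [hq1r1, hq2r2]
    have : 2.5 / N = 2.5 / (n:ℝ) := rfl
    linarith
  · rw [hq1r1, hq2r2]
    linarith
end

section
/- Let n ≥ 9 and Ψ(x) = x⁵ − (n+5)x⁴ + (6n+4)x³ − (10n−2)x² + (3n+12)x − 4. Then Ψ has a root in each of the intervals (3 − 0.8/ln n, 3 − 5/(4n)) and (n−1, n−1 + 5/(4n)). -/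
set_option maxHeartbeats 1000000


theorem stmt_6 (n : ℝ) (hn : 9 ≤ n)
    (Ψ : ℝ → ℝ)
    (hΨ : ∀ x, Ψ x = x ^ 5 - (n + 5) * x ^ 4 + (6 * n + 4) * x ^ 3
      - (10 * n - 2) * x ^ 2 + (3 * n + 12) * x - 4) :
    (∃ x : ℝ, Ψ x = 0 ∧ 3 - 0.8 / Real.log n < x ∧ x < 3 - 5 / (4 * n)) ∧
      (∃ x : ℝ, Ψ x = 0 ∧ n - 1 < x ∧ x < n - 1 + 5 / (4 * n)) := by
  have hn0 : (0:ℝ) < n := by linarith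
  have hfun : Ψ = fun x => x ^ 5 - (n + 5) * x ^ 4 + (6 * n + 4) * x ^ 3
      - (10 * n - 2) * x ^ 2 + (3 * n + 12) * x - 4 := funext hΨ
  have hc : Continuous Ψ := by rw [hfun]; continuity
  set L := Real.log n with hLdef
  have hL0 : 0 < L := Real.log_pos (by linarith)
  -- exp (0.15) ≤ 20/17
  have hexp015 : Real.exp 0.15 ≤ 20/17 := by
    have h1 : (1:ℝ) + (-0.15) ≤ Real.exp (-0.15) := by
      have := Real.add_one_le_exp (-0.15 : ℝ); linarith
    have h2 : Real.exp (-0.15) = (Real.exp 0.15)⁻¹ := by rw [Real.exp_neg]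
    have h3 : (0:ℝ) < Real.exp 0.15 := Real.exp_pos _
    rw [h2] at h1
    have h4 : Real.exp 0.15 * (Real.exp 0.15)⁻¹ = 1 := mul_inv_cancel₀ (ne_of_gt h3)
    nlinarith [h1, h3, h4]
  have hexp215 : Real.exp 2.15 ≤ 9 := by
    have he1 : Real.exp 1 < 2.7182818286 := Real.exp_one_lt_d9
    have he1p : (0:ℝ) < Real.exp 1 := Real.exp_pos _
    have : Real.exp 2.15 = Real.exp 1 * Real.exp 1 * Real.exp 0.15 := by
      rw [← Real.exp_add, ← Real.exp_add]; norm_num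
    rw [this]
    have h015 : (0:ℝ) < Real.exp 0.15 := Real.exp_pos _
    nlinarith [mul_pos he1p he1p]
  have hL215 : (2.15 : ℝ) ≤ L := by
    have : (2.15:ℝ) ≤ Real.log 9 := by
      rw [Real.le_log_iff_exp_le (by norm_num)]
      exact hexp215
    calc (2.15:ℝ) ≤ Real.log 9 := this
    _ ≤ L := Real.log_le_log (by norm_num) hn
  -- n ≥ (1 + L/4)^4
  have hexpn : (1 + L/4)^4 ≤ n := by
    have h1 : 1 + L/4 ≤ Real.exp (L/4) := by
      have := Real.add_one_le_exp (L/4); linarith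
    have h2 : (Real.exp (L/4))^4 = n := by
      rw [← Real.exp_nat_mul]
      norm_num
      rw [show (4:ℝ)*(L/4) = L by ring, hLdef, Real.exp_log hn0]
    calc (1 + L/4)^4 ≤ (Real.exp (L/4))^4 := by
          apply pow_le_pow_left₀ (by linarith) h1
    _ = n := h2
  -- first interval
  have hab1 : 3 - 0.8 / L ≤ 3 - 5 / (4 * n) := by
    have h1 : 5 / (4 * n) ≤ 0.8 / L := by
      rw [div_le_div_iff₀ (by linarith) hL0]
      nlinarith [hexpn, sq_nonneg L, sq_nonneg (L - 4), hL0]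
    linarith
  have hΨa : 0 < Ψ (3 - 0.8 / L) := by
    have hkey : Ψ (3 - 0.8 / L) * (3125 * L^5) =
        n * L * (7500*L^3 - 20000*L^2 + 9600*L - 1280)
        + (-12500*L^5 + 7500*L^4 + 76000*L^3 - 54400*L^2 + 12800*L - 1024) := by
      rw [hΨ]
      have hLne : L ≠ 0 := ne_of_gt hL0
      field_simp
      ring
    have hq : 0 < 7500*L^3 - 20000*L^2 + 9600*L - 1280 := by
      nlinarith [sq_nonneg (L - 2.15), hL215]
    have hpos : 0 < n * L * (7500*L^3 - 20000*L^2 + 9600*L - 1280)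
        + (-12500*L^5 + 7500*L^4 + 76000*L^3 - 54400*L^2 + 12800*L - 1024) := by
      rcases le_total L 3 with hL3 | hL3
      · have h9 : 9 * L * (7500*L^3 - 20000*L^2 + 9600*L - 1280)
            ≤ n * L * (7500*L^3 - 20000*L^2 + 9600*L - 1280) := by
          apply mul_le_mul_of_nonneg_right _ (le_of_lt hq)
          nlinarith
        nlinarith [sq_nonneg (L - 2.15), sq_nonneg (L - 3), mul_nonneg (sub_nonneg.mpr hL215) (sub_nonneg.mpr hL3)]
      · have hb : (1 + L/4)^4 * (L * (7500*L^3 - 20000*L^2 + 9600*L - 1280))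
            ≤ n * (L * (7500*L^3 - 20000*L^2 + 9600*L - 1280)) := by
          apply mul_le_mul_of_nonneg_right hexpn
          positivity
        have hu : (0:ℝ) ≤ L - 3 := by linarith
        have h8 : 0 < (1 + L/4)^4 * (L * (7500*L^3 - 20000*L^2 + 9600*L - 1280))
            + (-12500*L^5 + 7500*L^4 + 76000*L^3 - 54400*L^2 + 12800*L - 1024) := by
          nlinarith [pow_nonneg hu 2, pow_nonneg hu 3, pow_nonneg hu 4,
            pow_nonneg hu 5, pow_nonneg hu 6, pow_nonneg hu 7, pow_nonneg hu 8, hu]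
        nlinarith [hb, h8]
    have hL5 : 0 < 3125 * L^5 := by positivity
    nlinarith [hkey, hpos, hL5]
  have hΨb : Ψ (3 - 5 / (4 * n)) < 0 := by
    have hkey : Ψ (3 - 5 / (4 * n)) * (1024 * n^5) =
        -256*n^5 - 12160*n^4 + 72800*n^3 - 70500*n^2 + 25000*n - 3125 := by
      rw [hΨ]
      field_simp
      ring
    have hneg : -256*n^5 - 12160*n^4 + 72800*n^3 - 70500*n^2 + 25000*n - 3125 < 0 := by
      nlinarith [pow_pos hn0 3, pow_pos hn0 2, sq_nonneg (n - 9)]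
    have hn5 : 0 < 1024 * n^5 := by positivity
    nlinarith [hkey, hneg, hn5]
  -- second interval
  have hab2 : n - 1 ≤ n - 1 + 5 / (4 * n) := by
    have : 0 < 5 / (4 * n) := by positivity
    linarith
  have hΨc : Ψ (n - 1) < 0 := by
    rw [hΨ]
    nlinarith [sq_nonneg (n - 9)]
  have hΨd : 0 < Ψ (n - 1 + 5 / (4 * n)) := by
    have hkey : Ψ (n - 1 + 5 / (4 * n)) * (1024 * n^5) =
        1280*n^8 - 17920*n^7 + 75520*n^6 - 142976*n^5 + 178400*n^4
        - 140000*n^3 + 78000*n^2 - 25000*n + 3125 := by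
      rw [hΨ]
      field_simp
      ring
    have hpos : 0 < 1280*n^8 - 17920*n^7 + 75520*n^6 - 142976*n^5 + 178400*n^4
        - 140000*n^3 + 78000*n^2 - 25000*n + 3125 := by
      nlinarith [pow_pos hn0 6, pow_pos hn0 5, pow_pos hn0 4, pow_pos hn0 3,
        sq_nonneg (n - 9), mul_pos (pow_pos hn0 6) (mul_pos hn0 hn0),
        pow_pos hn0 2, mul_nonneg (pow_pos hn0 6).le (sq_nonneg (n - 9)),
        mul_nonneg (pow_pos hn0 4).le (sq_nonneg (n - 9))]
    have hn5 : 0 < 1024 * n^5 := by positivity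
    nlinarith [hkey, hpos, hn5]
  constructor
  · obtain ⟨x, hx, hfx⟩ := intermediate_value_Ioo' hab1 hc.continuousOn ⟨hΨb, hΨa⟩
    exact ⟨x, hfx, hx.1, hx.2⟩
  · obtain ⟨x, hx, hfx⟩ := intermediate_value_Ioo hab2 hc.continuousOn ⟨hΨc, hΨd⟩
    exact ⟨x, hfx, hx.1, hx.2⟩
end

section
/- For n ≥ 9, the quintic Ψ(x) = x⁵ − (n+5)x⁴ + (6n+4)x³ − (10n−2)x² + (3n+12)x − 4 has a root in each of the intervals [0, 0.3], [0.3, 1], and [1, 2.7]. -/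
theorem stmt_8 (n : ℝ) (hn : 9 ≤ n)
    (Ψ : ℝ → ℝ)
    (hΨ : ∀ x, Ψ x = x ^ 5 - (n + 5) * x ^ 4 + (6 * n + 4) * x ^ 3
      - (10 * n - 2) * x ^ 2 + (3 * n + 12) * x - 4) :
    (∃ x ∈ Set.Icc (0 : ℝ) 0.3, Ψ x = 0) ∧
      (∃ x ∈ Set.Icc (0.3 : ℝ) 1, Ψ x = 0) ∧
      (∃ x ∈ Set.Icc (1 : ℝ) 2.7, Ψ x = 0) := by
  have hΨ' : Ψ = fun x => x ^ 5 - (n + 5) * x ^ 4 + (6 * n + 4) * x ^ 3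
      - (10 * n - 2) * x ^ 2 + (3 * n + 12) * x - 4 := funext hΨ
  have hc : Continuous Ψ := by rw [hΨ']; fun_prop
  have h0 : Ψ 0 ≤ 0 := by rw [hΨ]; norm_num
  have h03 : 0 ≤ Ψ 0.3 := by rw [hΨ]; nlinarith
  have h1 : Ψ 1 ≤ 0 := by rw [hΨ]; nlinarith
  have h27 : 0 ≤ Ψ 2.7 := by rw [hΨ]; nlinarith
  refine ⟨?_, ?_, ?_⟩
  · obtain ⟨x, hx, hfx⟩ := intermediate_value_Icc (by norm_num : (0:ℝ) ≤ 0.3)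
      hc.continuousOn ⟨h0, h03⟩
    exact ⟨x, hx, hfx⟩
  · obtain ⟨x, hx, hfx⟩ := intermediate_value_Icc' (by norm_num : (0.3:ℝ) ≤ 1)
      hc.continuousOn ⟨h1, h03⟩
    exact ⟨x, hx, hfx⟩
  · obtain ⟨x, hx, hfx⟩ := intermediate_value_Icc (by norm_num : (1:ℝ) ≤ 2.7)
      hc.continuousOn ⟨h1, h27⟩
    exact ⟨x, hx, hfx⟩
end

section
/- Let F_{r,s,0} with r ≥ 2 and 2r + s + 1 ≥ 6. Then the largest signless Laplacian eigenvalue q₁ of F_{r,s,0} satisfies 2r + s + 1 < q₁ < 2r + s + 3/2. -/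
/-- Vertices of the firefly graph `F_{r,s,t}`: a center, `r` triangles
(two extra vertices each), `s` pendant vertices, and `t` pendant paths of
length 2 (two vertices each, the first one attached to the center). -/
abbrev FireflyV (r s t : ℕ) : Type := Unit ⊕ (Fin r × Fin 2) ⊕ Fin s ⊕ (Fin t × Fin 2)

/-- Adjacency of the firefly graph `F_{r,s,t}`. -/
def fireflyAdj {r s t : ℕ} : FireflyV r s t → FireflyV r s t → Bool
  | .inl _, .inr (.inl _) => true
  | .inr (.inl _), .inl _ => true
  | .inl _, .inr (.inr (.inl _)) => true
  | .inr (.inr (.inl _)), .inl _ => true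
  | .inl _, .inr (.inr (.inr (_, k))) => k == 0
  | .inr (.inr (.inr (_, k))), .inl _ => k == 0
  | .inr (.inl (i, a)), .inr (.inl (j, b)) => i == j && a != b
  | .inr (.inr (.inr (i, a))), .inr (.inr (.inr (j, b))) => i == j && a != b
  | _, _ => false

/-- Adjacency matrix of `F_{r,s,t}`. -/
def fireflyA (r s t : ℕ) : Matrix (FireflyV r s t) (FireflyV r s t) ℝ :=
  Matrix.of fun i j => if fireflyAdj i j then 1 else 0

/-- Signless Laplacian `Q = D + A` of `F_{r,s,t}`, where `D` is the diagonal
matrix of the row sums (degrees). -/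
def fireflyQ (r s t : ℕ) : Matrix (FireflyV r s t) (FireflyV r s t) ℝ :=
  Matrix.diagonal (fun i => ∑ j, fireflyA r s t i j) + fireflyA r s t

open Matrix

/-- Rayleigh-quotient upper bound by the largest eigenvalue. -/
lemma firefly_rayleigh_le {m : Type*} [Fintype m] [DecidableEq m] (A : Matrix m m ℝ)
    (hA : A.IsHermitian) (q : ℝ) (hmax : ∀ k, hA.eigenvalues k ≤ q) (v : m → ℝ) :
    v ⬝ᵥ (A *ᵥ v) ≤ q * (v ⬝ᵥ v) := by
  set U : Matrix m m ℝ := (hA.eigenvectorUnitary : Matrix m m ℝ) with hU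
  have hsp : A = U * diagonal (RCLike.ofReal ∘ hA.eigenvalues) * star U := hA.spectral_theorem
  set w : m → ℝ := star U *ᵥ v with hw
  have hst : star U = Uᵀ := by
    rw [star_eq_conjTranspose, conjTranspose_eq_transpose_of_trivial]
  have key : v ⬝ᵥ (A *ᵥ v) = w ⬝ᵥ (diagonal (RCLike.ofReal ∘ hA.eigenvalues) *ᵥ w) := by
    conv_lhs => rw [hsp]
    rw [← mulVec_mulVec, ← mulVec_mulVec, dotProduct_mulVec v U, hw]
    congr 1
    rw [hst, mulVec_transpose]
  have key2 : v ⬝ᵥ v = w ⬝ᵥ w := by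
    rw [hw, hst, mulVec_transpose, ← dotProduct_mulVec v U, mulVec_vecMul]
    have h1 : U * Uᵀ = 1 := by
      have := mem_unitaryGroup_iff.mp hA.eigenvectorUnitary.2
      rwa [hst] at this
    rw [h1, one_mulVec]
  rw [key, key2]
  have hterm : ∀ i : m, w i * (diagonal (RCLike.ofReal ∘ hA.eigenvalues) *ᵥ w) i
      ≤ q * (w i * w i) := by
    intro i
    rw [mulVec_diagonal]
    have h2 : (RCLike.ofReal ∘ hA.eigenvalues) i = hA.eigenvalues i := rfl
    rw [h2]
    have := mul_le_mul_of_nonneg_right (hmax i) (mul_self_nonneg (w i))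
    nlinarith [this]
  calc w ⬝ᵥ (diagonal (RCLike.ofReal ∘ hA.eigenvalues) *ᵥ w)
      = ∑ i, w i * (diagonal (RCLike.ofReal ∘ hA.eigenvalues) *ᵥ w) i := rfl
    _ ≤ ∑ i, q * (w i * w i) := Finset.sum_le_sum fun i _ => hterm i
    _ = q * (w ⬝ᵥ w) := by simp [dotProduct, Finset.mul_sum]

/-- Weighted Gershgorin bound for a nonnegative matrix and a nonnegative eigenvalue. -/
lemma firefly_gersh {m : Type*} [Fintype m] [DecidableEq m] [Nonempty m] (A : Matrix m m ℝ)
    (hnn : ∀ i j, 0 ≤ A i j) (q : ℝ) (hq : 0 ≤ q) (v : m → ℝ) (hv : v ≠ 0)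
    (hev : A *ᵥ v = q • v) (x : m → ℝ) (hx : ∀ i, 0 < x i) (c : ℝ)
    (hrow : ∀ i, ∑ j, A i j * x j < c * x i) : q < c := by
  obtain ⟨i, -, hi⟩ := Finset.exists_max_image Finset.univ (fun j => |v j| / x j)
    ⟨Classical.arbitrary m, Finset.mem_univ _⟩
  set M := |v i| / x i with hM
  have hMpos : 0 < M := by
    obtain ⟨j, hj⟩ := Function.ne_iff.mp hv
    have h1 : 0 < |v j| / x j := div_pos (abs_pos.mpr hj) (hx j)
    exact lt_of_lt_of_le h1 (hi j (Finset.mem_univ j))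
  have hvj : ∀ j, |v j| ≤ M * x j := fun j =>
    (div_le_iff₀ (hx j)).mp (hi j (Finset.mem_univ j))
  have hvi : M * x i = |v i| := div_mul_cancel₀ _ (hx i).ne'
  have h1 : q * |v i| ≤ ∑ j, A i j * (M * x j) := by
    calc q * |v i| = |q * v i| := by rw [abs_mul, abs_of_nonneg hq]
      _ = |(A *ᵥ v) i| := by rw [hev]; simp [mul_comm]
      _ ≤ ∑ j, |A i j * v j| := Finset.abs_sum_le_sum_abs _ _
      _ ≤ ∑ j, A i j * (M * x j) := Finset.sum_le_sum fun j _ => by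
          rw [abs_mul, abs_of_nonneg (hnn i j)]
          exact mul_le_mul_of_nonneg_left (hvj j) (hnn i j)
  have h2 : ∑ j, A i j * (M * x j) < M * (c * x i) := by
    calc ∑ j, A i j * (M * x j) = M * ∑ j, A i j * x j := by
          rw [Finset.mul_sum]; congr 1; ext j; ring
      _ < M * (c * x i) := (mul_lt_mul_iff_right₀ hMpos).mpr (hrow i)
  have h3 : q * (M * x i) < c * (M * x i) := by
    rw [hvi]; rw [show c * |v i| = M * (c * x i) by rw [← hvi]; ring]
    exact lt_of_le_of_lt h1 h2
  exact lt_of_mul_lt_mul_right (by linarith) (le_of_lt (mul_pos hMpos (hx i)))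

/-- A vector on the firefly graph taking value `a` at the center, `b` elsewhere. -/
def ffvec {r s : ℕ} (a b : ℝ) : FireflyV r s 0 → ℝ := Sum.elim (fun _ => a) (fun _ => b)

lemma ff_sumA_center (r s : ℕ) (a b : ℝ) :
    ∑ j, fireflyA r s 0 (.inl ()) j * ffvec a b j = (2 * r + s) * b := by
  rw [Fintype.sum_sum_type]
  simp [fireflyA, fireflyAdj, ffvec, Fintype.sum_sum_type, Fintype.sum_prod_type,
    Fin.sum_univ_two]
  ring

lemma ff_sumA_tri (r s : ℕ) (a b : ℝ) (p : Fin r × Fin 2) :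
    ∑ j, fireflyA r s 0 (.inr (.inl p)) j * ffvec a b j = a + b := by
  obtain ⟨i, c⟩ := p
  rw [Fintype.sum_sum_type]
  simp only [fireflyA, fireflyAdj, ffvec, Fintype.sum_sum_type, Fintype.sum_prod_type,
    Fin.sum_univ_two, Matrix.of_apply, Sum.elim_inl, Sum.elim_inr]
  fin_cases c <;> simp [Finset.sum_ite_eq, beq_iff_eq]

lemma ff_sumA_pend (r s : ℕ) (a b : ℝ) (k : Fin s) :
    ∑ j, fireflyA r s 0 (.inr (.inr (.inl k))) j * ffvec a b j = a := by
  rw [Fintype.sum_sum_type]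
  simp [fireflyA, fireflyAdj, ffvec, Fintype.sum_sum_type, Fintype.sum_prod_type,
    Fin.sum_univ_two]

lemma ff_deg (r s : ℕ) (i : FireflyV r s 0) :
    ∑ j, fireflyA r s 0 i j = ∑ j, fireflyA r s 0 i j * ffvec 1 1 j :=
  Finset.sum_congr rfl fun j _ => by cases j <;> simp [ffvec]

lemma ff_deg_center (r s : ℕ) : ∑ j, fireflyA r s 0 (.inl ()) j = 2 * r + s := by
  rw [ff_deg, ff_sumA_center]; ring

lemma ff_deg_tri (r s : ℕ) (p : Fin r × Fin 2) :
    ∑ j, fireflyA r s 0 (.inr (.inl p)) j = 2 := by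
  rw [ff_deg, ff_sumA_tri]; norm_num

lemma ff_deg_pend (r s : ℕ) (k : Fin s) :
    ∑ j, fireflyA r s 0 (.inr (.inr (.inl k))) j = 1 := by
  rw [ff_deg, ff_sumA_pend]

lemma ff_sumQ (r s : ℕ) (x : FireflyV r s 0 → ℝ) (i : FireflyV r s 0) :
    ∑ j, fireflyQ r s 0 i j * x j
      = (∑ j, fireflyA r s 0 i j) * x i + ∑ j, fireflyA r s 0 i j * x j := by
  unfold fireflyQ
  simp only [Matrix.add_apply, add_mul, Finset.sum_add_distrib]
  congr 1
  simp [Matrix.diagonal_apply, ite_mul, Finset.sum_ite_eq, Finset.mem_univ]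

lemma ff_sumQ_center (r s : ℕ) (a b : ℝ) :
    ∑ j, fireflyQ r s 0 (.inl ()) j * ffvec a b j
      = (2 * r + s) * a + (2 * r + s) * b := by
  rw [ff_sumQ, ff_deg_center, ff_sumA_center]; rfl

lemma ff_sumQ_tri (r s : ℕ) (a b : ℝ) (p : Fin r × Fin 2) :
    ∑ j, fireflyQ r s 0 (.inr (.inl p)) j * ffvec a b j = 2 * b + (a + b) := by
  rw [ff_sumQ, ff_deg_tri, ff_sumA_tri]; rfl

lemma ff_sumQ_pend (r s : ℕ) (a b : ℝ) (k : Fin s) :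
    ∑ j, fireflyQ r s 0 (.inr (.inr (.inl k))) j * ffvec a b j = b + a := by
  rw [ff_sumQ, ff_deg_pend, ff_sumA_pend]; simp [ffvec]

lemma ff_Q_nonneg (r s : ℕ) (i j : FireflyV r s 0) : 0 ≤ fireflyQ r s 0 i j := by
  unfold fireflyQ
  rw [Matrix.add_apply, Matrix.diagonal_apply]
  have h1 : (0:ℝ) ≤ fireflyA r s 0 i j := by
    simp only [fireflyA, Matrix.of_apply]; split <;> norm_num
  have h2 : (0:ℝ) ≤ ∑ k, fireflyA r s 0 i k := Finset.sum_nonneg fun k _ => by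
    simp only [fireflyA, Matrix.of_apply]; split <;> norm_num
  split <;> linarith

/-- Decomposition of a dot product with an `ffvec` over the vertex classes. -/
lemma ff_dot (r s : ℕ) (a b : ℝ) (w : FireflyV r s 0 → ℝ) :
    ffvec a b ⬝ᵥ w = a * w (.inl ())
      + ∑ p : Fin r × Fin 2, b * w (.inr (.inl p))
      + ∑ k : Fin s, b * w (.inr (.inr (.inl k))) := by
  unfold dotProduct
  rw [Fintype.sum_sum_type, Fintype.sum_sum_type, Fintype.sum_sum_type]
  simp [ffvec]
  ring

theorem stmt_12 (r s : ℕ) (hr : 2 ≤ r) (hn : 6 ≤ 2 * r + s + 1)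
    (hQ : (fireflyQ r s 0).IsHermitian) (q1 : ℝ) (i : FireflyV r s 0)
    (hq1 : hQ.eigenvalues i = q1)
    (hmax : ∀ k, hQ.eigenvalues k ≤ q1) :
    2 * (r : ℝ) + s + 1 < q1 ∧ q1 < 2 * (r : ℝ) + s + 3 / 2 := by
  set rR : ℝ := (r : ℝ) with hrR
  set sR : ℝ := (s : ℝ) with hsR
  have hrR2 : (2:ℝ) ≤ rR := by rw [hrR]; exact_mod_cast hr
  have hsR0 : (0:ℝ) ≤ sR := Nat.cast_nonneg s
  have hnR : (6:ℝ) ≤ 2 * rR + sR + 1 := by rw [hrR, hsR]; exact_mod_cast hn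
  set c : ℝ := 2 * rR + sR with hc
  have hc5 : (5:ℝ) ≤ c := by linarith
  have hmul : ∀ (x : FireflyV r s 0 → ℝ) (j : FireflyV r s 0),
      (fireflyQ r s 0 *ᵥ x) j = ∑ k, fireflyQ r s 0 j k * x k := fun x j => rfl
  -- Lower bound via Rayleigh quotient with vector (c, 1, …, 1)
  have hlow : 2 * rR + sR + 1 < q1 := by
    set v : FireflyV r s 0 → ℝ := ffvec c 1 with hv
    have hray := firefly_rayleigh_le _ hQ q1 hmax v
    have hQv : v ⬝ᵥ (fireflyQ r s 0 *ᵥ v)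
        = c * (c * c + c) + 2 * rR * (2 + (c + 1)) + sR * (1 + c) := by
      rw [hv, ff_dot r s c 1 (fireflyQ r s 0 *ᵥ ffvec c 1)]
      simp only [hmul, ff_sumQ_center, ff_sumQ_tri, ff_sumQ_pend]
      rw [Finset.sum_const, Finset.sum_const]
      simp only [Finset.card_univ, Fintype.card_prod, Fintype.card_fin, smul_eq_mul]
      push_cast
      rw [hc]; ring
    have hvv : v ⬝ᵥ v = c * c + 2 * rR + sR := by
      rw [hv, ff_dot r s c 1 (ffvec c 1)]
      simp only [ffvec, Sum.elim_inl, Sum.elim_inr]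
      rw [Finset.sum_const, Finset.sum_const]
      simp only [Finset.card_univ, Fintype.card_prod, Fintype.card_fin, smul_eq_mul]
      push_cast
      ring
    rw [hQv, hvv] at hray
    nlinarith [hray, hc5, hrR2]
  refine ⟨hlow, ?_⟩
  -- Upper bound via weighted Gershgorin with the eigenvector of q1
  set n : ℝ := 2 * rR + sR + 1 with hN
  have hq1pos : (0:ℝ) ≤ q1 := by linarith
  set v : FireflyV r s 0 → ℝ := ⇑(hQ.eigenvectorBasis i) with hv
  have hev : fireflyQ r s 0 *ᵥ v = q1 • v := by
    rw [hv, hQ.mulVec_eigenvectorBasis, hq1]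
  have hvne : v ≠ 0 := by
    intro h
    exact hQ.eigenvectorBasis.orthonormal.ne_zero i (by ext j; exact congrFun h j)
  set x : FireflyV r s 0 → ℝ := ffvec (10 * n - 19) 12 with hx
  have hxpos : ∀ j, 0 < x j := by
    intro j
    rw [hx]
    rcases j with _ | j
    · simp only [ffvec, Sum.elim_inl]; linarith
    · simp only [ffvec, Sum.elim_inr]; norm_num
  have hrow : ∀ j, ∑ k, fireflyQ r s 0 j k * x k < (2 * rR + sR + 3 / 2) * x j := by
    intro j
    rcases j with _ | p | k | z
    · rw [hx]
      rw [ff_sumQ_center r s (10 * n - 19) 12]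
      simp only [ffvec, Sum.elim_inl]
      push_cast
      nlinarith [hnR]
    · rw [hx, ff_sumQ_tri r s (10 * n - 19) 12 p]
      simp only [ffvec, Sum.elim_inr]
      push_cast
      nlinarith [hnR]
    · rw [hx, ff_sumQ_pend r s (10 * n - 19) 12 k]
      simp only [ffvec, Sum.elim_inr]
      push_cast
      nlinarith [hnR]
    · exact z.1.elim0
  have := firefly_gersh (fireflyQ r s 0) (ff_Q_nonneg r s) q1 hq1pos v hvne hev x hxpos
    (2 * rR + sR + 3 / 2) (fun j => by simpa [hmul] using hrow j)
  exact this
end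

section
/- Let f(G) = e(G) + 3 − (q₁(G) + q₂(G)) for the signless Laplacian Q(G). Then f(F_{1,n−3,0}) → 0 as n → ∞; more precisely, 0 < f(F_{1,n−3,0}) < 2.5/n for all n ≥ 7. -/
open Matrix Finset

namespace StarPlusAux

variable {n : ℕ}

lemma adj_iff (i j : Fin n) : starPlusAdj n i j ↔
    ((i.val < 3 ∧ j.val < 3 ∧ i.val ≠ j.val) ∨ (i.val = 2 ∧ 3 ≤ j.val) ∨
      (j.val = 2 ∧ 3 ≤ i.val)) := by
  simp [starPlusAdj, Fin.ext_iff]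

lemma sum_eqk (k : ℕ) (hk : k < n) :
    ∑ i : Fin n, (if i.val = k then (1:ℝ) else 0) = 1 := by
  simp_rw [show ∀ i : Fin n, (i.val = k) ↔ (i = ⟨k, hk⟩) from fun i => by
    simp [Fin.ext_iff]]
  simp

lemma rowsum (hn : 7 ≤ n) (i : Fin n) : ∑ j, starPlusA n i j =
    if i.val = 2 then (n:ℝ)-1 else if i.val < 3 then 2 else 1 := by
  by_cases hi2 : i.val = 2
  · have key : ∀ j : Fin n, starPlusA n i j = 1 - (if j.val = 2 then (1:ℝ) else 0) := by
      intro j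
      by_cases hj2 : j.val = 2
      · show (if starPlusAdj n i j then (1:ℝ) else 0) = _
        rw [if_neg (by rw [adj_iff]; omega), if_pos hj2]; norm_num
      · show (if starPlusAdj n i j then (1:ℝ) else 0) = _
        rw [if_pos ((adj_iff i j).mpr (by omega)), if_neg hj2]; norm_num
    simp_rw [key, Finset.sum_sub_distrib, sum_eqk (n := n) 2 (by omega), Finset.sum_const,
      Finset.card_univ, Fintype.card_fin, nsmul_eq_mul, mul_one, if_pos hi2]
  · by_cases hi3 : i.val < 3
    · have key : ∀ j : Fin n, starPlusA n i j =
          (if j.val < 3 then (1:ℝ) else 0) - (if j.val = i.val then 1 else 0) := by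
        intro j
        by_cases hj3 : j.val < 3
        · by_cases hji : j.val = i.val
          · show (if starPlusAdj n i j then (1:ℝ) else 0) = _
            rw [if_neg (by rw [adj_iff]; omega), if_pos hj3, if_pos hji]; norm_num
          · show (if starPlusAdj n i j then (1:ℝ) else 0) = _
            rw [if_pos ((adj_iff i j).mpr (by omega)), if_pos hj3, if_neg hji]; norm_num
        · show (if starPlusAdj n i j then (1:ℝ) else 0) = _
          rw [if_neg (by rw [adj_iff]; omega), if_neg hj3, if_neg (by omega)]; norm_num
      have klt : ∑ j : Fin n, (if j.val < 3 then (1:ℝ) else 0) = 3 := by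
        have key2 : ∀ j : Fin n, (if j.val < 3 then (1:ℝ) else 0) =
            (if j.val = 0 then 1 else 0) + (if j.val = 1 then 1 else 0) +
            (if j.val = 2 then 1 else 0) := by
          intro j
          by_cases h0 : j.val = 0
          · rw [if_pos (by omega), if_pos h0, if_neg (by omega), if_neg (by omega)]; norm_num
          · by_cases h1 : j.val = 1
            · rw [if_pos (by omega), if_neg (by omega), if_pos h1, if_neg (by omega)]; norm_num
            · by_cases h2 : j.val = 2
              · rw [if_pos (by omega), if_neg (by omega), if_neg (by omega), if_pos h2]; norm_num
              · rw [if_neg (by omega), if_neg h0, if_neg h1, if_neg h2]; norm_num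
        have e0 := sum_eqk (n := n) 0 (by omega)
        have e1 := sum_eqk (n := n) 1 (by omega)
        have e2 := sum_eqk (n := n) 2 (by omega)
        simp_rw [key2, Finset.sum_add_distrib, e0, e1, e2]; norm_num
      simp_rw [key, Finset.sum_sub_distrib, klt, sum_eqk (n := n) i.val i.isLt, if_neg hi2, if_pos hi3]
      norm_num
    · have key : ∀ j : Fin n, starPlusA n i j = (if j.val = 2 then (1:ℝ) else 0) := by
        intro j
        by_cases hj2 : j.val = 2
        · show (if starPlusAdj n i j then (1:ℝ) else 0) = _
          rw [if_pos ((adj_iff i j).mpr (by omega)), if_pos hj2]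
        · show (if starPlusAdj n i j then (1:ℝ) else 0) = _
          rw [if_neg (by rw [adj_iff]; omega), if_neg hj2]
      simp_rw [key, sum_eqk (n := n) 2 (by omega), if_neg hi2, if_neg hi3]



noncomputable def auxA (n : ℕ) : Matrix (Fin n) (Fin 3) ℝ :=
  Matrix.of fun i => ![if i.val < 3 then 1 else 0, if i.val = 2 then 1 else 0,
    if 3 ≤ i.val then 1 else 0]

noncomputable def auxB (n : ℕ) : Matrix (Fin n) (Fin 3) ℝ :=
  Matrix.of fun i => ![if i.val < 3 then 1 else 0,
    (if 3 ≤ i.val then 1 else 0) + ((n:ℝ)-3) * (if i.val = 2 then 1 else 0),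
    if i.val = 2 then 1 else 0]

noncomputable def auxC (n : ℕ) : Matrix (Fin 3) (Fin 3) ℝ :=
  !![3,1,0; (n:ℝ)-3,(n:ℝ)-3,(n:ℝ)-3; 1,1,0]

lemma decomp (hn : 7 ≤ n) : starPlusQ n = 1 + auxA n * (auxB n)ᵀ := by
  ext i j
  simp only [starPlusQ, Matrix.add_apply, Matrix.diagonal_apply, Matrix.one_apply,
    Matrix.mul_apply, Matrix.transpose_apply, Fin.sum_univ_three, auxA, auxB,
    Matrix.of_apply, Matrix.cons_val', Matrix.cons_val_zero, Matrix.cons_val_one,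
    Matrix.head_cons, Matrix.cons_val_fin_one, Matrix.empty_val',
    Matrix.cons_val_two, Matrix.tail_cons]
  rw [rowsum hn i]
  show _ + (if starPlusAdj n i j then (1:ℝ) else 0) = _
  by_cases hij : i = j
  · subst hij
    rw [if_neg (show ¬ starPlusAdj n i i by rw [adj_iff]; omega)]
    simp only [eq_self_iff_true, if_true]
    split_ifs <;> first | ring1 | (exfalso; omega)
  · have hij' : i.val ≠ j.val := by simpa [Fin.ext_iff] using hij
    rw [if_neg hij, if_neg hij]
    by_cases hadj : starPlusAdj n i j
    · have h := (adj_iff i j).mp hadj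
      rw [if_pos hadj]
      split_ifs <;> first | ring1 | (exfalso; omega)
    · have h : ¬ _ := fun hh => hadj ((adj_iff i j).mpr hh)
      rw [if_neg hadj]
      split_ifs <;> first | ring1 | (exfalso; omega)


lemma BtA (hn : 7 ≤ n) : (auxB n)ᵀ * auxA n = auxC n := by
  have hge : ∀ i : Fin n, (if 3 ≤ i.val then (1:ℝ) else 0) =
      1 - (if i.val < 3 then 1 else 0) := by
    intro i
    by_cases h : 3 ≤ i.val
    · rw [if_pos h, if_neg (by omega)]; norm_num
    · rw [if_neg h, if_pos (by omega)]; norm_num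
  have e2 := sum_eqk (n := n) 2 (by omega)
  have elt : ∑ i : Fin n, (if i.val < 3 then (1:ℝ) else 0) = 3 := by
    have key2 : ∀ j : Fin n, (if j.val < 3 then (1:ℝ) else 0) =
        (if j.val = 0 then 1 else 0) + (if j.val = 1 then 1 else 0) +
        (if j.val = 2 then 1 else 0) := by
      intro j
      by_cases h0 : j.val = 0
      · rw [if_pos (by omega), if_pos h0, if_neg (by omega), if_neg (by omega)]; norm_num
      · by_cases h1 : j.val = 1
        · rw [if_pos (by omega), if_neg (by omega), if_pos h1, if_neg (by omega)]; norm_num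
        · by_cases h2 : j.val = 2
          · rw [if_pos (by omega), if_neg (by omega), if_neg (by omega), if_pos h2]; norm_num
          · rw [if_neg (by omega), if_neg h0, if_neg h1, if_neg h2]; norm_num
    simp_rw [key2, Finset.sum_add_distrib, sum_eqk (n := n) 0 (by omega),
      sum_eqk (n := n) 1 (by omega), e2]; norm_num
  have ege : ∑ i : Fin n, (if 3 ≤ i.val then (1:ℝ) else 0) = (n:ℝ) - 3 := by
    simp_rw [hge, Finset.sum_sub_distrib, elt, Finset.sum_const, Finset.card_univ,
      Fintype.card_fin, nsmul_eq_mul, mul_one]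
  have ptw : ∀ (k l : Fin 3), ∀ i : Fin n, auxB n i k * auxA n i l =
      (if k = 0 ∧ l = 0 then (if i.val < 3 then (1:ℝ) else 0) else
       if k = 1 ∧ l = 2 then (if 3 ≤ i.val then 1 else 0) else
       if (k = 0 ∧ l = 2) ∨ (k = 2 ∧ l = 2) then 0 else
       if k = 1 then ((n:ℝ)-3) * (if i.val = 2 then 1 else 0) else
       (if i.val = 2 then 1 else 0)) := by
    intro k l i
    fin_cases k <;> fin_cases l <;>
      simp only [auxA, auxB, Matrix.of_apply, Matrix.cons_val_zero, Matrix.cons_val_one,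
        Matrix.head_cons, Matrix.cons_val_two, Matrix.tail_cons] <;>
      by_cases h2 : i.val = 2 <;> by_cases h3 : i.val < 3 <;>
      simp [h2, h3, show ¬ (3:ℕ) ≤ 2 from by omega] <;>
      first
        | ring1
        | (exfalso; omega)
        | (rw [if_pos (by omega : 3 ≤ i.val)] <;> ring1)
        | (rw [if_neg (by omega : ¬ 3 ≤ i.val)] <;> ring1)
  have epull : ∑ x : Fin n, (if x.val = 2 then (n:ℝ)-3 else 0) = (n:ℝ)-3 := by
    simp_rw [show ∀ x : Fin n, (if x.val = 2 then (n:ℝ)-3 else 0) =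
      ((n:ℝ)-3) * (if x.val = 2 then 1 else 0) from fun x => by split_ifs <;> ring,
      ← Finset.mul_sum, e2, mul_one]
  ext k l
  rw [Matrix.mul_apply]
  simp_rw [Matrix.transpose_apply]
  rw [Finset.sum_congr rfl fun i _ => ptw k l i]
  fin_cases k <;> fin_cases l <;>
    norm_num [auxC, Fin.ext_iff, elt, ege, e2, epull]


lemma trace_Q (hn : 7 ≤ n) : (starPlusQ n).trace = 2*(n:ℝ) := by
  rw [decomp hn, Matrix.trace_add, Matrix.trace_one, Matrix.trace_mul_comm, BtA hn]
  simp [auxC, Matrix.trace_fin_three]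
  ring

lemma trace_QQ (hn : 7 ≤ n) : (starPlusQ n * starPlusQ n).trace = (n:ℝ)^2 + n + 6 := by
  set M := auxA n * (auxB n)ᵀ with hM
  have hexp : starPlusQ n * starPlusQ n = 1 + M + M + M * M := by
    rw [decomp hn, hM]
    noncomm_ring
  have hMM : (M * M).trace = (auxC n * auxC n).trace := by
    have : M * M = auxA n * (((auxB n)ᵀ * auxA n) * (auxB n)ᵀ) := by
      rw [hM, Matrix.mul_assoc, ← Matrix.mul_assoc ((auxB n)ᵀ)]
    rw [this, Matrix.trace_mul_comm, Matrix.mul_assoc, Matrix.trace_mul_comm, BtA hn]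
  have hMtr : M.trace = (n:ℝ) := by
    rw [hM, Matrix.trace_mul_comm, BtA hn]
    simp [auxC, Matrix.trace_fin_three]
  rw [hexp, Matrix.trace_add, Matrix.trace_add, Matrix.trace_add, Matrix.trace_one, hMM, hMtr]
  have : (auxC n * auxC n).trace = (n:ℝ)^2 - 2*n + 6 := by
    simp [auxC, Matrix.trace_fin_three, Matrix.mul_apply, Fin.sum_univ_three]
    ring
  rw [this, Fintype.card_fin]
  push_cast
  ring

lemma det_Q (hn : 7 ≤ n) : (starPlusQ n).det = 4 := by
  rw [decomp hn, Matrix.det_one_add_mul_comm, BtA hn]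
  simp [auxC, Matrix.det_fin_three, Matrix.one_apply]
  ring

lemma rank_Qsub1 (hn : 7 ≤ n) : (starPlusQ n - 1).rank ≤ 3 := by
  have h : starPlusQ n - 1 = auxA n * (auxB n)ᵀ := by
    rw [decomp hn, add_sub_cancel_left]
  rw [h]
  exact le_trans (Matrix.rank_mul_le_left _ _)
    (le_trans (Matrix.rank_le_card_width _) (by simp))

lemma adj_symm (i j : Fin n) : starPlusAdj n i j ↔ starPlusAdj n j i := by
  rw [adj_iff, adj_iff]; omega

lemma posSemidef_Q (hn : 7 ≤ n) (hQ : (starPlusQ n).IsHermitian) :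
    (starPlusQ n).PosSemidef := by
  refine Matrix.posSemidef_iff_dotProduct_mulVec.mpr ⟨hQ, fun x => ?_⟩
  have hstar : star x = x := by simp
  rw [hstar]
  have key : x ⬝ᵥ (starPlusQ n *ᵥ x) =
      ∑ i, ∑ j, starPlusA n i j * (x i^2 + x i * x j) := by
    rw [starPlusQ, Matrix.add_mulVec, dotProduct_add]
    have h1 : x ⬝ᵥ (Matrix.diagonal (fun i => ∑ j, starPlusA n i j) *ᵥ x) =
        ∑ i, ∑ j, starPlusA n i j * x i ^ 2 := by
      simp only [dotProduct, Matrix.mulVec_diagonal]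
      refine Finset.sum_congr rfl fun i _ => ?_
      rw [Finset.sum_mul, Finset.mul_sum]
      refine Finset.sum_congr rfl fun j _ => ?_
      ring
    have h2 : x ⬝ᵥ (starPlusA n *ᵥ x) = ∑ i, ∑ j, starPlusA n i j * (x i * x j) := by
      simp only [dotProduct, Matrix.mulVec]
      refine Finset.sum_congr rfl fun i _ => ?_
      rw [Finset.mul_sum]
      refine Finset.sum_congr rfl fun j _ => ?_
      ring
    rw [h1, h2, ← Finset.sum_add_distrib]
    refine Finset.sum_congr rfl fun i _ => ?_
    rw [← Finset.sum_add_distrib]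
    refine Finset.sum_congr rfl fun j _ => ?_
    ring
  have hsymA : ∀ i j : Fin n, starPlusA n i j = starPlusA n j i := by
    intro i j
    show (if starPlusAdj n i j then (1:ℝ) else 0) = (if starPlusAdj n j i then (1:ℝ) else 0)
    by_cases h : starPlusAdj n i j
    · rw [if_pos h, if_pos ((adj_symm i j).mp h)]
    · rw [if_neg h, if_neg (fun hh => h ((adj_symm j i).mp hh))]
  have swap : ∑ i, ∑ j, starPlusA n i j * (x i^2 + x i * x j) =
      ∑ i, ∑ j, starPlusA n i j * (x j^2 + x j * x i) := by
    conv_rhs => rw [Finset.sum_comm]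
    refine Finset.sum_congr rfl fun i _ => Finset.sum_congr rfl fun j _ => ?_
    rw [hsymA i j]
  have key2 : x ⬝ᵥ (starPlusQ n *ᵥ x) =
      (1/2) * ∑ i, ∑ j, starPlusA n i j * (x i + x j)^2 := by
    rw [key]
    have h2 : (2:ℝ) * (∑ i, ∑ j, starPlusA n i j * (x i^2 + x i * x j)) =
        ∑ i, ∑ j, starPlusA n i j * (x i + x j)^2 := by
      calc (2:ℝ) * (∑ i, ∑ j, starPlusA n i j * (x i^2 + x i * x j))
          = (∑ i, ∑ j, starPlusA n i j * (x i^2 + x i * x j)) +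
            (∑ i, ∑ j, starPlusA n i j * (x i^2 + x i * x j)) := by ring
        _ = (∑ i, ∑ j, starPlusA n i j * (x i^2 + x i * x j)) +
            (∑ i, ∑ j, starPlusA n i j * (x j^2 + x j * x i)) := by rw [swap]
        _ = ∑ i, ∑ j, starPlusA n i j * (x i + x j)^2 := by
            rw [← Finset.sum_add_distrib]
            refine Finset.sum_congr rfl fun i _ => ?_
            rw [← Finset.sum_add_distrib]
            refine Finset.sum_congr rfl fun j _ => ?_
            ring
    linarith [h2]
  rw [key2]
  have hnn : 0 ≤ ∑ i, ∑ j, starPlusA n i j * (x i + x j)^2 := by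
    refine Finset.sum_nonneg fun i _ => Finset.sum_nonneg fun j _ => ?_
    refine mul_nonneg ?_ (sq_nonneg _)
    show 0 ≤ (if starPlusAdj n i j then (1:ℝ) else 0)
    split_ifs <;> norm_num
  linarith


lemma spectralQ (hQ : (starPlusQ n).IsHermitian) :
    starPlusQ n = (hQ.eigenvectorUnitary : Matrix (Fin n) (Fin n) ℝ) *
      Matrix.diagonal hQ.eigenvalues *
      star (hQ.eigenvectorUnitary : Matrix (Fin n) (Fin n) ℝ) := by
  have h := hQ.spectral_theorem
  refine h.trans ?_
  simp [Unitary.conjStarAlgAut_apply, Function.comp_def]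

lemma sum_eig (hn : 7 ≤ n) (hQ : (starPlusQ n).IsHermitian) :
    ∑ k, hQ.eigenvalues k = 2*(n:ℝ) := by
  have hU2 : star (hQ.eigenvectorUnitary : Matrix (Fin n) (Fin n) ℝ) *
      (hQ.eigenvectorUnitary : Matrix (Fin n) (Fin n) ℝ) = 1 := Unitary.coe_star_mul_self _
  have e1 := congrArg Matrix.trace (spectralQ hQ)
  rw [Matrix.trace_mul_comm, ← Matrix.mul_assoc, hU2, one_mul, Matrix.trace_diagonal,
    trace_Q hn] at e1
  exact e1.symm

lemma sumsq_eig (hn : 7 ≤ n) (hQ : (starPlusQ n).IsHermitian) :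
    ∑ k, (hQ.eigenvalues k)^2 = (n:ℝ)^2 + n + 6 := by
  have hU2 : star (hQ.eigenvectorUnitary : Matrix (Fin n) (Fin n) ℝ) *
      (hQ.eigenvectorUnitary : Matrix (Fin n) (Fin n) ℝ) = 1 := Unitary.coe_star_mul_self _
  have e1 : (starPlusQ n * starPlusQ n).trace =
      (((hQ.eigenvectorUnitary : Matrix (Fin n) (Fin n) ℝ) *
        (Matrix.diagonal hQ.eigenvalues * Matrix.diagonal hQ.eigenvalues)) *
        star (hQ.eigenvectorUnitary : Matrix (Fin n) (Fin n) ℝ)).trace := by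
    conv_lhs => rw [spectralQ hQ]
    congr 1
    have t : ((hQ.eigenvectorUnitary : Matrix (Fin n) (Fin n) ℝ) *
        Matrix.diagonal hQ.eigenvalues *
        star (hQ.eigenvectorUnitary : Matrix (Fin n) (Fin n) ℝ)) *
        ((hQ.eigenvectorUnitary : Matrix (Fin n) (Fin n) ℝ) *
        Matrix.diagonal hQ.eigenvalues *
        star (hQ.eigenvectorUnitary : Matrix (Fin n) (Fin n) ℝ)) =
        (hQ.eigenvectorUnitary : Matrix (Fin n) (Fin n) ℝ) * Matrix.diagonal hQ.eigenvalues *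
        (star (hQ.eigenvectorUnitary : Matrix (Fin n) (Fin n) ℝ) *
         (hQ.eigenvectorUnitary : Matrix (Fin n) (Fin n) ℝ)) *
        (Matrix.diagonal hQ.eigenvalues *
         star (hQ.eigenvectorUnitary : Matrix (Fin n) (Fin n) ℝ)) := by
      noncomm_ring
    rw [t, hU2, mul_one]
    noncomm_ring
  have e2 : (((hQ.eigenvectorUnitary : Matrix (Fin n) (Fin n) ℝ) *
        (Matrix.diagonal hQ.eigenvalues * Matrix.diagonal hQ.eigenvalues)) *
        star (hQ.eigenvectorUnitary : Matrix (Fin n) (Fin n) ℝ)).trace =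
      (Matrix.diagonal hQ.eigenvalues * Matrix.diagonal hQ.eigenvalues).trace := by
    rw [Matrix.trace_mul_comm, ← Matrix.mul_assoc, hU2, one_mul]
  have e3 : (Matrix.diagonal hQ.eigenvalues * Matrix.diagonal hQ.eigenvalues).trace =
      ∑ k, (hQ.eigenvalues k)^2 := by
    rw [Matrix.diagonal_mul_diagonal, Matrix.trace_diagonal]
    exact Finset.sum_congr rfl fun k _ => (sq _).symm
  rw [← e3, ← e2, ← e1, trace_QQ hn]

lemma prod_eig (hn : 7 ≤ n) (hQ : (starPlusQ n).IsHermitian) :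
    ∏ k, hQ.eigenvalues k = 4 := by
  have h := hQ.det_eq_prod_eigenvalues
  rw [det_Q hn] at h
  exact_mod_cast h.symm

lemma card_ne_one (hn : 7 ≤ n) (hQ : (starPlusQ n).IsHermitian) :
    (Finset.univ.filter (fun k => hQ.eigenvalues k ≠ 1)).card ≤ 3 := by
  have hU1 : (hQ.eigenvectorUnitary : Matrix (Fin n) (Fin n) ℝ) *
      star (hQ.eigenvectorUnitary : Matrix (Fin n) (Fin n) ℝ) = 1 :=
    Unitary.coe_mul_star_self _
  have hU2 : star (hQ.eigenvectorUnitary : Matrix (Fin n) (Fin n) ℝ) *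
      (hQ.eigenvectorUnitary : Matrix (Fin n) (Fin n) ℝ) = 1 := Unitary.coe_star_mul_self _
  have hdetU : IsUnit ((hQ.eigenvectorUnitary : Matrix (Fin n) (Fin n) ℝ)).det :=
    IsUnit.of_mul_eq_one (star (hQ.eigenvectorUnitary : Matrix (Fin n) (Fin n) ℝ)).det
      (by rw [← Matrix.det_mul, hU1, Matrix.det_one])
  have hdetsU : IsUnit (star (hQ.eigenvectorUnitary : Matrix (Fin n) (Fin n) ℝ)).det :=
    IsUnit.of_mul_eq_one ((hQ.eigenvectorUnitary : Matrix (Fin n) (Fin n) ℝ)).det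
      (by rw [← Matrix.det_mul, hU2, Matrix.det_one])
  have key : starPlusQ n - 1 = (hQ.eigenvectorUnitary : Matrix (Fin n) (Fin n) ℝ) *
      (Matrix.diagonal hQ.eigenvalues - 1) *
      star (hQ.eigenvectorUnitary : Matrix (Fin n) (Fin n) ℝ) := by
    have t : (hQ.eigenvectorUnitary : Matrix (Fin n) (Fin n) ℝ) *
        (Matrix.diagonal hQ.eigenvalues - 1) *
        star (hQ.eigenvectorUnitary : Matrix (Fin n) (Fin n) ℝ) =
        (hQ.eigenvectorUnitary : Matrix (Fin n) (Fin n) ℝ) *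
        Matrix.diagonal hQ.eigenvalues *
        star (hQ.eigenvectorUnitary : Matrix (Fin n) (Fin n) ℝ) -
        (hQ.eigenvectorUnitary : Matrix (Fin n) (Fin n) ℝ) *
        star (hQ.eigenvectorUnitary : Matrix (Fin n) (Fin n) ℝ) := by
      noncomm_ring
    rw [t, hU1, ← spectralQ hQ]
  have hrank : (starPlusQ n - 1).rank = (Matrix.diagonal hQ.eigenvalues - 1).rank := by
    rw [key, Matrix.rank_mul_eq_left_of_isUnit_det _ _ hdetsU,
      Matrix.rank_mul_eq_right_of_isUnit_det _ _ hdetU]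
  have hdiag : Matrix.diagonal hQ.eigenvalues - 1 =
      Matrix.diagonal (fun k => hQ.eigenvalues k - 1) := by
    rw [← Matrix.diagonal_one, Matrix.diagonal_sub]
  have hr3 : (Matrix.diagonal hQ.eigenvalues - 1).rank ≤ 3 := by
    rw [← hrank]; exact rank_Qsub1 hn
  rw [hdiag, Matrix.rank_diagonal] at hr3
  have hcard : (Finset.univ.filter (fun k => hQ.eigenvalues k ≠ 1)).card =
      Fintype.card {k // hQ.eigenvalues k - 1 ≠ 0} := by
    rw [Fintype.card_subtype]
    congr 1
    apply Finset.filter_congr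
    intro k _
    simp [sub_ne_zero]
  omega

lemma eig_nonneg (hn : 7 ≤ n) (hQ : (starPlusQ n).IsHermitian) (k : Fin n) :
    0 ≤ hQ.eigenvalues k :=
  (posSemidef_Q hn hQ).eigenvalues_nonneg k

end StarPlusAux

open StarPlusAux

set_option maxHeartbeats 1000000 in
/-- `f(G) = e(G) + 3 − (q₁ + q₂)`; for `S_n⁺` we have `e(G) = n`. -/
theorem stmt_16 (n : ℕ) (hn : 7 ≤ n)
    (hQ : (starPlusQ n).IsHermitian) (q1 q2 : ℝ) (i j : Fin n) (hij : i ≠ j)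
    (hq1 : hQ.eigenvalues i = q1) (hq2 : hQ.eigenvalues j = q2)
    (hmax1 : ∀ k, hQ.eigenvalues k ≤ q1)
    (hmax2 : ∀ k, k ≠ i → hQ.eigenvalues k ≤ q2) :
    0 < (n : ℝ) + 3 - (q1 + q2) ∧ (n : ℝ) + 3 - (q1 + q2) < 2.5 / n := by
  set μ : Fin n → ℝ := hQ.eigenvalues with hμ
  have hnR : (7:ℝ) ≤ (n:ℝ) := by exact_mod_cast hn
  have hsum : ∑ k, μ k = 2*(n:ℝ) := sum_eig hn hQ
  have hsq : ∑ k, (μ k)^2 = (n:ℝ)^2 + n + 6 := sumsq_eig hn hQ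
  have hprod : ∏ k, μ k = 4 := prod_eig hn hQ
  have hpos : ∀ k, 0 ≤ μ k := eig_nonneg hn hQ
  set s : Finset (Fin n) := Finset.univ.filter (fun k => μ k ≠ 1) with hs
  have hcard : s.card ≤ 3 := card_ne_one hn hQ
  -- q1 ≥ 2
  have hq1ge : 2 ≤ q1 := by
    have h1 : ∑ k, μ k ≤ ∑ _k : Fin n, q1 := Finset.sum_le_sum fun k _ => hmax1 k
    rw [hsum, Finset.sum_const, Finset.card_univ, Fintype.card_fin, nsmul_eq_mul] at h1
    nlinarith
  -- q1 < n + 1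
  have hq1lt : q1 < (n:ℝ) + 1 := by
    have h1 : (μ i)^2 ≤ ∑ k, (μ k)^2 :=
      Finset.single_le_sum (fun k _ => sq_nonneg (μ k)) (Finset.mem_univ i)
    rw [hq1, hsq] at h1
    nlinarith
  -- q2 > 1
  have hq2gt : 1 < q2 := by
    have h1 : ∑ k ∈ Finset.univ.erase i, μ k ≤ ∑ _k ∈ Finset.univ.erase i, q2 :=
      Finset.sum_le_sum fun k hk => hmax2 k (Finset.ne_of_mem_erase hk)
    have h2 : ∑ k ∈ Finset.univ.erase i, μ k = 2*(n:ℝ) - q1 := by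
      have h3 := Finset.sum_erase_add Finset.univ μ (Finset.mem_univ i)
      rw [hsum, hq1] at h3
      linarith
    rw [h2, Finset.sum_const, Finset.card_erase_of_mem (Finset.mem_univ i),
      Finset.card_univ, Fintype.card_fin, nsmul_eq_mul] at h1
    have hc : ((n - 1 : ℕ) : ℝ) = (n:ℝ) - 1 := by
      have : 1 ≤ n := by omega
      push_cast [this]
      ring
    rw [hc] at h1
    by_contra hle
    push_neg at hle
    nlinarith [mul_nonneg (by linarith : (0:ℝ) ≤ (n:ℝ)-1) (by linarith : 0 ≤ 1 - q2)]
  have hq2le : q2 ≤ q1 := hq2 ▸ hmax1 j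
  have hi_s : i ∈ s := by
    rw [hs, Finset.mem_filter]
    exact ⟨Finset.mem_univ i, by rw [hq1]; intro h; rw [h] at hq1ge; linarith⟩
  have hj_s : j ∈ s := by
    rw [hs, Finset.mem_filter]
    exact ⟨Finset.mem_univ j, by rw [hq2]; intro h; rw [h] at hq2gt; linarith⟩
  by_cases hsub : s ⊆ ({i, j} : Finset (Fin n))
  · -- impossible case: only two non-1 eigenvalues
    exfalso
    have hone : ∀ k, k ∉ ({i, j} : Finset (Fin n)) → μ k = 1 := by
      intro k hk
      by_contra hne
      exact hk (hsub (by rw [hs, Finset.mem_filter]; exact ⟨Finset.mem_univ k, hne⟩))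
    have hcard2 : ({i, j} : Finset (Fin n)).card = 2 := Finset.card_pair hij
    have hcardc : ((Finset.univ \ ({i, j} : Finset (Fin n))).card : ℝ) = (n:ℝ) - 2 := by
      rw [Finset.card_sdiff_of_subset (Finset.subset_univ _), Finset.card_univ, Fintype.card_fin, hcard2]
      have : 2 ≤ n := by omega
      push_cast [this]
      ring
    have hS : q1 + q2 = (n:ℝ) + 2 := by
      have h4 := Finset.sum_sdiff (f := μ) (Finset.subset_univ ({i, j} : Finset (Fin n)))
      rw [hsum, Finset.sum_pair hij, hq1, hq2] at h4
      have h5 : ∑ k ∈ Finset.univ \ ({i, j} : Finset (Fin n)), μ k =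
          ((Finset.univ \ ({i, j} : Finset (Fin n))).card : ℝ) := by
        rw [Finset.sum_congr rfl fun k hk => hone k (Finset.mem_sdiff.mp hk).2,
          Finset.sum_const, nsmul_eq_mul, mul_one]
      rw [h5, hcardc] at h4
      linarith
    have hP : q1^2 + q2^2 = (n:ℝ)^2 + 8 := by
      have h4 := Finset.sum_sdiff (f := fun k => (μ k)^2)
        (Finset.subset_univ ({i, j} : Finset (Fin n)))
      rw [hsq, Finset.sum_pair hij, hq1, hq2] at h4
      have h5 : ∑ k ∈ Finset.univ \ ({i, j} : Finset (Fin n)), (μ k)^2 =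
          ((Finset.univ \ ({i, j} : Finset (Fin n))).card : ℝ) := by
        rw [Finset.sum_congr rfl fun k hk => by
            rw [hone k (Finset.mem_sdiff.mp hk).2, one_pow],
          Finset.sum_const, nsmul_eq_mul, mul_one]
      rw [h5, hcardc] at h4
      linarith
    have hPr : q1 * q2 = 4 := by
      have h4 := Finset.prod_sdiff (f := μ) (Finset.subset_univ ({i, j} : Finset (Fin n)))
      rw [hprod, Finset.prod_pair hij, hq1, hq2] at h4
      have h5 : ∏ k ∈ Finset.univ \ ({i, j} : Finset (Fin n)), μ k = 1 :=
        Finset.prod_eq_one fun k hk => hone k (Finset.mem_sdiff.mp hk).2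
      rw [h5, one_mul] at h4
      linarith
    have hn3 : (n:ℝ) = 3 := by nlinarith [hS, hP, hPr]
    linarith
  · -- main case
    obtain ⟨k0, hk0s, hk0ij⟩ := Finset.not_subset.mp hsub
    have hk0i : k0 ≠ i := by intro h; exact hk0ij (by simp [h])
    have hk0j : k0 ≠ j := by intro h; exact hk0ij (by simp [h])
    set t3 : Finset (Fin n) := insert i (insert j {k0}) with ht3
    have hi_not : i ∉ insert j ({k0} : Finset (Fin n)) := by
      simp only [Finset.mem_insert, Finset.mem_singleton]
      push_neg
      exact ⟨hij, Ne.symm hk0i⟩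
    have hj_not : j ∉ ({k0} : Finset (Fin n)) := by
      simp only [Finset.mem_singleton]
      exact Ne.symm hk0j
    have hcard3 : t3.card = 3 := by
      rw [ht3, Finset.card_insert_of_notMem hi_not,
        Finset.card_insert_of_notMem hj_not, Finset.card_singleton]
    have hsub3 : t3 ⊆ s := by
      rw [ht3]
      refine Finset.insert_subset hi_s (Finset.insert_subset hj_s ?_)
      simpa using hk0s
    have hseq : t3 = s := Finset.eq_of_subset_of_card_le hsub3 (by omega)
    have hone : ∀ k, k ∉ t3 → μ k = 1 := by
      intro k hk
      by_contra hne
      exact hk (by rw [hseq, hs, Finset.mem_filter]; exact ⟨Finset.mem_univ k, hne⟩)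
    set r : ℝ := μ k0 with hr
    have hrq2 : r ≤ q2 := hmax2 k0 hk0i
    have hrpos0 : 0 ≤ r := hpos k0
    have hcardc : ((Finset.univ \ t3).card : ℝ) = (n:ℝ) - 3 := by
      rw [Finset.card_sdiff_of_subset (Finset.subset_univ _), Finset.card_univ, Fintype.card_fin, hcard3]
      have : 3 ≤ n := by omega
      push_cast [this]
      ring
    have hsum3 : ∑ k ∈ t3, μ k = q1 + q2 + r := by
      rw [ht3, Finset.sum_insert hi_not, Finset.sum_insert hj_not, Finset.sum_singleton,
        hq1, hq2]
      ring
    have hsq3 : ∑ k ∈ t3, (μ k)^2 = q1^2 + q2^2 + r^2 := by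
      rw [ht3, Finset.sum_insert hi_not, Finset.sum_insert hj_not, Finset.sum_singleton,
        hq1, hq2]
      ring
    have hprod3 : ∏ k ∈ t3, μ k = q1 * q2 * r := by
      rw [ht3, Finset.prod_insert hi_not, Finset.prod_insert hj_not, Finset.prod_singleton,
        hq1, hq2]
      ring
    have hS : q1 + q2 + r = (n:ℝ) + 3 := by
      have h4 := Finset.sum_sdiff (f := μ) (Finset.subset_univ t3)
      rw [hsum, hsum3] at h4
      have h5 : ∑ k ∈ Finset.univ \ t3, μ k = ((Finset.univ \ t3).card : ℝ) := by
        rw [Finset.sum_congr rfl fun k hk => hone k (Finset.mem_sdiff.mp hk).2,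
          Finset.sum_const, nsmul_eq_mul, mul_one]
      rw [h5, hcardc] at h4
      linarith
    have hP : q1^2 + q2^2 + r^2 = (n:ℝ)^2 + 9 := by
      have h4 := Finset.sum_sdiff (f := fun k => (μ k)^2) (Finset.subset_univ t3)
      rw [hsq, hsq3] at h4
      have h5 : ∑ k ∈ Finset.univ \ t3, (μ k)^2 = ((Finset.univ \ t3).card : ℝ) := by
        rw [Finset.sum_congr rfl fun k hk => by
            rw [hone k (Finset.mem_sdiff.mp hk).2, one_pow],
          Finset.sum_const, nsmul_eq_mul, mul_one]
      rw [h5, hcardc] at h4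
      linarith
    have hPr : q1 * q2 * r = 4 := by
      have h4 := Finset.prod_sdiff (f := μ) (Finset.subset_univ t3)
      rw [hprod, hprod3] at h4
      have h5 : ∏ k ∈ Finset.univ \ t3, μ k = 1 :=
        Finset.prod_eq_one fun k hk => hone k (Finset.mem_sdiff.mp hk).2
      rw [h5, one_mul] at h4
      linarith
    -- e2 identity
    have he2 : q1*q2 + q1*r + q2*r = 3*(n:ℝ) := by
      linear_combination ((q1+q2+r+(n:ℝ)+3)/2) * hS - (1/2) * hP
    have hrpos : 0 < r := by
      rcases eq_or_lt_of_le hrpos0 with h | h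
      · exfalso; rw [← h] at hPr; simp at hPr
      · exact h
    constructor
    · linarith
    · by_contra hge
      push_neg at hge
      have hge' : 2.5 ≤ (n:ℝ) * r := by
        rw [div_le_iff₀ (by linarith : (0:ℝ) < (n:ℝ))] at hge
        have hreq : (n:ℝ) + 3 - (q1+q2) = r := by linarith
        rw [hreq, mul_comm] at hge
        exact hge
      have hq2n : 2.5 ≤ (n:ℝ) * q2 := le_trans hge'
        (mul_le_mul_of_nonneg_left hrq2 (by linarith : (0:ℝ) ≤ (n:ℝ)))
      have hq1n : 2.5 ≤ (n:ℝ) * q1 := le_trans hq2n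
        (mul_le_mul_of_nonneg_left hq2le (by linarith : (0:ℝ) ≤ (n:ℝ)))
      have hp12 : 0 ≤ (2.5 - (n:ℝ)*q1) * (2.5 - (n:ℝ)*q2) := by
        have h' := mul_nonneg (by linarith : (0:ℝ) ≤ (n:ℝ)*q1 - 2.5)
          (by linarith : (0:ℝ) ≤ (n:ℝ)*q2 - 2.5)
        linarith [h']
      have hp : (2.5 - (n:ℝ)*q1) * (2.5 - (n:ℝ)*q2) * (2.5 - (n:ℝ)*r) ≤ 0 :=
        mul_nonpos_of_nonneg_of_nonpos hp12 (by linarith)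
      have hexpand : (2.5 - (n:ℝ)*q1) * (2.5 - (n:ℝ)*q2) * (2.5 - (n:ℝ)*r) =
          3.5*(n:ℝ)^3 - 6.25*(n:ℝ)^2 - 18.75*(n:ℝ) + 15.625 := by
        linear_combination (-6.25*(n:ℝ)) * hS + (2.5*(n:ℝ)^2) * he2 - (n:ℝ)^3 * hPr
      rw [hexpand] at hp
      linarith [hp, mul_nonneg (sub_nonneg.mpr hnR) (sq_nonneg (n:ℝ)),
        mul_nonneg (sub_nonneg.mpr hnR) (by linarith : (0:ℝ) ≤ (n:ℝ))]
end
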